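/- Let E > 0, let T_A > T_B > 0, and let n_A > n_B ≥ 1 be natural numbers. On (ℂ²)^{⊗(n_A+n_B)} with standard basis {e_b : b ∈ {0,1}^{n_A+n_B}}, let H be the diagonal Hamiltonian with H e_b = E · wgt(b) · e_b (wgt = Hamming weight), and let ρ = γ_{T_A}^{⊗ n_A} ⊗ γ_{T_B}^{⊗ n_B}, where γ_T = diag(1, e^{−E/T})/(1 + e^{−E/T}). Then there exists a unitary U with tr(U ρ U† H) < tr(ρ H) if and only if T_A/T_B > (n_B + 1)/n_B. -/

import Mathlib

/-- The Gibbs occupation probability of level `j ∈ {0,1}` of a two-level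
system with energy gap `E` at temperature `T`. -/
noncomputable def qubitProb (E T : ℝ) (j : Fin 2) : ℝ :=
  (if j = 0 then 1 else Real.exp (-E / T)) / (1 + Real.exp (-E / T))

section Helpers

open Matrix Finset

lemma tr_form {n : Type*} [Fintype n] [DecidableEq n] (U : Matrix n n ℂ) (p h : n → ℝ) :
    (Matrix.trace (U * Matrix.diagonal (fun b => (p b : ℂ)) * star U *
      Matrix.diagonal (fun b => (h b : ℂ)))).re =
    ∑ i, ∑ j, Complex.normSq (U i j) * p j * h i := by
  simp only [Matrix.trace, Matrix.diag, Matrix.mul_apply, Matrix.diagonal_apply,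
    Matrix.star_apply, RCLike.star_def, mul_ite, ite_mul, zero_mul, mul_zero,
    Finset.sum_ite_eq, Finset.sum_ite_eq', Finset.mem_univ, if_true]
  rw [Complex.re_sum]
  refine Finset.sum_congr rfl fun i _ => ?_
  rw [Finset.sum_mul, Complex.re_sum]
  refine Finset.sum_congr rfl fun j _ => ?_
  have : U i j * (p j : ℂ) * (starRingEnd ℂ) (U i j) * (h i : ℂ)
      = ((Complex.normSq (U i j) * p j * h i : ℝ) : ℂ) := by
    push_cast
    rw [← Complex.mul_conj]; ring
  rw [this, Complex.ofReal_re]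

lemma tr_diag {n : Type*} [Fintype n] [DecidableEq n] (p h : n → ℝ) :
    (Matrix.trace (Matrix.diagonal (fun b => (p b : ℂ)) *
      Matrix.diagonal (fun b => (h b : ℂ)))).re = ∑ i, p i * h i := by
  rw [Matrix.diagonal_mul_diagonal, Matrix.trace_diagonal, Complex.re_sum]
  exact Finset.sum_congr rfl fun i _ => by
    rw [← Complex.ofReal_mul, Complex.ofReal_re]

lemma normSq_ds {n : Type*} [Fintype n] [DecidableEq n] {U : Matrix n n ℂ}
    (hU : U ∈ Matrix.unitaryGroup n ℂ) :
    (Matrix.of fun i j => Complex.normSq (U i j)) ∈ doublyStochastic ℝ n := by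
  rw [mem_doublyStochastic_iff_sum]
  have h1 : U * star U = 1 := Matrix.mem_unitaryGroup_iff.mp hU
  have h2 : star U * U = 1 := Matrix.mem_unitaryGroup_iff'.mp hU
  refine ⟨fun i j => Complex.normSq_nonneg _, fun i => ?_, fun j => ?_⟩
  · have := congrArg (fun M => (M i i).re) h1
    simpa [Matrix.mul_apply, Matrix.one_apply, Matrix.star_apply, Complex.mul_conj,
      Complex.re_sum] using this
  · have := congrArg (fun M => (M j j).re) h2
    simpa [Matrix.mul_apply, Matrix.one_apply, Matrix.star_apply, Complex.mul_conj,
      Complex.re_sum, mul_comm] using this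

lemma ds_bound {n : Type*} [Fintype n] [DecidableEq n] {D : Matrix n n ℝ}
    (hD : D ∈ doublyStochastic ℝ n) {p h : n → ℝ} (hph : Antivary p h) :
    ∑ i, p i * h i ≤ ∑ i, ∑ j, D i j * p j * h i := by
  obtain ⟨w, hw0, hw1, hw3⟩ := exists_eq_sum_perm_of_mem_doublyStochastic hD
  have hD' : ∀ i j, D i j = ∑ σ : Equiv.Perm n, w σ * (if j = σ i then 1 else 0) := by
    intro i j
    rw [← hw3]
    simp [Matrix.sum_apply, Matrix.smul_apply, Equiv.Perm.permMatrix,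
      PEquiv.toMatrix_apply, Equiv.toPEquiv_apply]
    exact Finset.sum_congr rfl fun σ _ => if_congr eq_comm rfl rfl
  have key : ∑ i, ∑ j, D i j * p j * h i = ∑ σ : Equiv.Perm n, w σ * ∑ i, p (σ i) * h i := by
    have h1 : ∀ i, ∑ j, D i j * p j * h i = ∑ σ : Equiv.Perm n, w σ * (p (σ i) * h i) := by
      intro i
      calc ∑ j, D i j * p j * h i
          = ∑ j, ∑ σ : Equiv.Perm n, w σ * (if j = σ i then 1 else 0) * p j * h i := by
            refine Finset.sum_congr rfl fun j _ => ?_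
            rw [hD' i j, Finset.sum_mul, Finset.sum_mul]
        _ = ∑ σ : Equiv.Perm n, ∑ j, w σ * (if j = σ i then 1 else 0) * p j * h i :=
            Finset.sum_comm
        _ = ∑ σ : Equiv.Perm n, w σ * (p (σ i) * h i) := by
            refine Finset.sum_congr rfl fun σ _ => ?_
            simp [mul_ite, ite_mul, Finset.sum_ite_eq', mul_assoc]
    rw [Finset.sum_congr rfl (fun i _ => h1 i), Finset.sum_comm]
    exact Finset.sum_congr rfl fun σ _ => by rw [Finset.mul_sum]
  rw [key]
  calc ∑ i, p i * h i = ∑ σ : Equiv.Perm n, w σ * ∑ i, p i * h i := by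
        rw [← Finset.sum_mul, hw1, one_mul]
    _ ≤ ∑ σ : Equiv.Perm n, w σ * ∑ i, p (σ i) * h i := by
        refine Finset.sum_le_sum fun σ _ => mul_le_mul_of_nonneg_left ?_ (hw0 σ)
        exact hph.sum_mul_le_sum_comp_perm_mul

lemma card_filter_lt (N k : ℕ) (hk : k ≤ N) :
    (Finset.univ.filter (fun i : Fin N => (i : ℕ) < k)).card = k := by
  have : (Finset.univ.filter fun i : Fin N => (i : ℕ) < k)
      = (Finset.univ : Finset (Fin k)).map (Fin.castLEEmb hk) := by
    ext i
    simp only [Finset.mem_filter, Finset.mem_univ, true_and, Finset.mem_map,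
      Fin.castLEEmb, Function.Embedding.coeFn_mk]
    constructor
    · intro hi; exact ⟨⟨(i : ℕ), hi⟩, Fin.ext rfl⟩
    · rintro ⟨a, rfl⟩; simpa using a.isLt
  rw [this, Finset.card_map, Finset.card_univ, Fintype.card_fin]

lemma permMatrix_apply {n : Type*} [Fintype n] [DecidableEq n] (σ : Equiv.Perm n) (i j : n) :
    (σ.permMatrix ℂ) i j = if σ i = j then 1 else 0 := by
  simp [Equiv.Perm.permMatrix, PEquiv.toMatrix_apply, Equiv.toPEquiv_apply, eq_comm]

lemma permMatrix_unitary {n : Type*} [Fintype n] [DecidableEq n] (σ : Equiv.Perm n) :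
    (σ.permMatrix ℂ) ∈ Matrix.unitaryGroup n ℂ := by
  rw [Matrix.mem_unitaryGroup_iff]
  ext i j
  simp only [Matrix.mul_apply, Matrix.star_apply, permMatrix_apply, Matrix.one_apply]
  simp only [apply_ite star, star_one, star_zero, ite_mul, one_mul, zero_mul, mul_ite, mul_one,
    mul_zero]
  rw [Finset.sum_ite_eq Finset.univ (σ j) (fun k => if σ i = k then (1:ℂ) else 0)]
  by_cases hij : i = j <;> simp [hij, EmbeddingLike.apply_eq_iff_eq]

lemma normSq_permMatrix {n : Type*} [Fintype n] [DecidableEq n] (σ : Equiv.Perm n) (i j : n) :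
    Complex.normSq ((σ.permMatrix ℂ) i j) = if σ i = j then 1 else 0 := by
  rw [permMatrix_apply]; split <;> simp

lemma qubitProb_exp (E T : ℝ) (j : Fin 2) :
    qubitProb E T j = Real.exp (-(E * ((j : ℕ) : ℝ)) / T) * (1 + Real.exp (-E / T))⁻¹ := by
  fin_cases j <;> simp [qubitProb, div_eq_mul_inv, neg_div]

lemma prod_formula {N : ℕ} (E : ℝ) (T : Fin N → ℝ) (b : Fin N → Fin 2) :
    ∏ i, qubitProb E (T i) (b i)
      = Real.exp (∑ i, -(E * ((b i : ℕ) : ℝ)) / T i) * ∏ i, (1 + Real.exp (-E / T i))⁻¹ := by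
  rw [Real.exp_sum, ← Finset.prod_mul_distrib]
  exact Finset.prod_congr rfl fun i _ => qubitProb_exp E (T i) (b i)

lemma p_compare {N : ℕ} (E : ℝ) (T : Fin N → ℝ) (b b' : Fin N → Fin 2)
    (hg : ∑ i, -(E * ((b' i : ℕ) : ℝ)) / T i ≤ ∑ i, -(E * ((b i : ℕ) : ℝ)) / T i) :
    ∏ i, qubitProb E (T i) (b' i) ≤ ∏ i, qubitProb E (T i) (b i) := by
  rw [prod_formula, prod_formula]
  have hC : 0 < ∏ i, (1 + Real.exp (-E / T i))⁻¹ :=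
    Finset.prod_pos fun i _ => by positivity
  exact mul_le_mul_of_nonneg_right (Real.exp_le_exp.mpr hg) hC.le

lemma p_compare_lt {N : ℕ} (E : ℝ) (T : Fin N → ℝ) (b b' : Fin N → Fin 2)
    (hg : ∑ i, -(E * ((b' i : ℕ) : ℝ)) / T i < ∑ i, -(E * ((b i : ℕ) : ℝ)) / T i) :
    ∏ i, qubitProb E (T i) (b' i) < ∏ i, qubitProb E (T i) (b i) := by
  rw [prod_formula, prod_formula]
  have hC : 0 < ∏ i, (1 + Real.exp (-E / T i))⁻¹ :=
    Finset.prod_pos fun i _ => by positivity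
  exact mul_lt_mul_of_pos_right (Real.exp_lt_exp.mpr hg) hC

lemma arith_core {T_A T_B : ℝ} (hTB : 0 < T_B) (hT : T_B < T_A) {nB : ℕ} (hnB : 1 ≤ nB)
    (hc : T_A * (nB : ℝ) ≤ ((nB : ℝ) + 1) * T_B)
    {a c a' c' : ℝ} (hc' : 0 ≤ c') (hcnB : c ≤ (nB : ℝ))
    (hw : a + c + 1 ≤ a' + c') :
    a / T_A + c / T_B ≤ a' / T_A + c' / T_B := by
  have hTA : 0 < T_A := hTB.trans hT
  have hnB' : (1 : ℝ) ≤ (nB : ℝ) := by exact_mod_cast hnB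
  have key : ∀ x : ℝ, 0 < x → x ≤ (nB : ℝ) → x * T_A ≤ (x + 1) * T_B := by
    intro x hx0 hxnB
    nlinarith [mul_le_mul_of_nonneg_left hc hx0.le,
      mul_nonneg (sub_nonneg.2 hxnB) hTB.le]
  have G : a * T_B + c * T_A ≤ a' * T_B + c' * T_A := by
    rcases le_or_gt c c' with hcc | hcc
    · nlinarith [mul_le_mul_of_nonneg_right hw hTB.le,
        mul_nonneg (sub_nonneg.2 hcc) (sub_nonneg.2 hT.le)]
    · have hm := key (c - c') (by linarith) (by linarith)
      have h1 := mul_le_mul_of_nonneg_right hw hTB.le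
      nlinarith
  rw [div_add_div _ _ hTA.ne' hTB.ne', div_add_div _ _ hTA.ne' hTB.ne']
  exact (div_le_div_iff_of_pos_right (by positivity)).mpr (by linarith)

end Helpers

/-- **Complexity of Using Small Temperature Gaps, case `n_A > n_B`.**
On `n_A` hot and `n_B` cold equal-gap qubits, a unitary heat engine exists if
and only if `T_A/T_B > (n_B + 1)/n_B`. -/
theorem stmt_10 (E T_A T_B : ℝ) (hE : 0 < E) (hTB : 0 < T_B) (hT : T_B < T_A)
    (nA nB : ℕ) (hnB : 1 ≤ nB) (hn : nB < nA) :
    (∃ U ∈ Matrix.unitaryGroup (Fin (nA + nB) → Fin 2) ℂ,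
      (Matrix.trace (U *
          Matrix.diagonal (fun b : Fin (nA + nB) → Fin 2 =>
            ((∏ i : Fin (nA + nB), qubitProb E (if (i : ℕ) < nA then T_A else T_B) (b i) : ℝ) : ℂ)) *
          star U *
          Matrix.diagonal (fun b : Fin (nA + nB) → Fin 2 =>
            ((E * ∑ i, ((b i : ℕ) : ℝ) : ℝ) : ℂ)))).re <
      (Matrix.trace (
          Matrix.diagonal (fun b : Fin (nA + nB) → Fin 2 =>
            ((∏ i : Fin (nA + nB), qubitProb E (if (i : ℕ) < nA then T_A else T_B) (b i) : ℝ) : ℂ)) *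
          Matrix.diagonal (fun b : Fin (nA + nB) → Fin 2 =>
            ((E * ∑ i, ((b i : ℕ) : ℝ) : ℝ) : ℂ)))).re) ↔
    ((nB : ℝ) + 1) / (nB : ℝ) < T_A / T_B := by
  have hTA : 0 < T_A := hTB.trans hT
  have hnB0 : (0 : ℝ) < (nB : ℝ) := by exact_mod_cast hnB
  have hnAN : nA ≤ nA + nB := Nat.le_add_right _ _
  have hnB1A : nB + 1 ≤ nA := hn
  -- abbreviations
  set T : Fin (nA + nB) → ℝ := fun i => if (i : ℕ) < nA then T_A else T_B with hTdef
  set P : (Fin (nA + nB) → Fin 2) → ℝ :=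
    fun b => ∏ i, qubitProb E (T i) (b i) with hPdef
  set H : (Fin (nA + nB) → Fin 2) → ℝ :=
    fun b => E * ∑ i, ((b i : ℕ) : ℝ) with hHdef
  -- generic count lemma
  have cardA : ∀ (k : ℕ), k ≤ nA + nB → ∀ x : ℝ,
      ∑ i : Fin (nA + nB), (if (i : ℕ) < k then x else 0) = (k : ℝ) * x := by
    intro k hk x
    rw [← Finset.sum_filter, Finset.sum_const, card_filter_lt _ k hk, nsmul_eq_mul]
  have cardB : ∀ x : ℝ,
      ∑ i : Fin (nA + nB), (if (i : ℕ) < nA then 0 else x) = (nB : ℝ) * x := by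
    intro x
    have h1 := cardA nA hnAN x
    have hsum : ∑ i : Fin (nA + nB),
        ((if (i : ℕ) < nA then x else 0) + (if (i : ℕ) < nA then 0 else x))
        = ((nA + nB : ℕ) : ℝ) * x := by
      have : ∀ i : Fin (nA + nB),
          ((if (i : ℕ) < nA then x else 0) + (if (i : ℕ) < nA then 0 else x)) = x := by
        intro i; by_cases hi : (i : ℕ) < nA <;> simp [hi]
      rw [Finset.sum_congr rfl fun i _ => this i, Finset.sum_const, Finset.card_univ,
        Fintype.card_fin, nsmul_eq_mul]
    rw [Finset.sum_add_distrib, h1] at hsum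
    push_cast at hsum ⊢
    linarith
  -- decomposition of the inverse-temperature weighted sum
  have split : ∀ b : Fin (nA + nB) → Fin 2,
      ∑ i, ((b i : ℕ) : ℝ) / T i
        = (∑ i : Fin (nA + nB), if (i : ℕ) < nA then ((b i : ℕ) : ℝ) else 0) / T_A
          + (∑ i : Fin (nA + nB), if (i : ℕ) < nA then 0 else ((b i : ℕ) : ℝ)) / T_B := by
    intro b
    rw [Finset.sum_div, Finset.sum_div, ← Finset.sum_add_distrib]
    refine Finset.sum_congr rfl fun i _ => ?_
    by_cases hi : (i : ℕ) < nA <;> simp [hTdef, hi]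
  -- rewriting the supply of -(E*b_i)/T_i sums
  have negsum : ∀ b : Fin (nA + nB) → Fin 2,
      ∑ i, -(E * ((b i : ℕ) : ℝ)) / T i = -(E * ∑ i, ((b i : ℕ) : ℝ) / T i) := by
    intro b
    rw [Finset.mul_sum, ← Finset.sum_neg_distrib]
    exact Finset.sum_congr rfl fun i _ => by rw [neg_div, mul_div_assoc]
  constructor
  · -- engine exists → temperature ratio large
    rintro ⟨U, hU, hlt⟩
    by_contra hcon
    push_neg at hcon
    rw [div_le_div_iff₀ hTB hnB0] at hcon
    have hc : T_A * (nB : ℝ) ≤ ((nB : ℝ) + 1) * T_B := by linarith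
    have hA : Antivary P H := by
      intro b b' hlt'
      have hS : (∑ i, (b i : ℕ)) + 1 ≤ ∑ i, (b' i : ℕ) := by
        have h' : (∑ i, ((b i : ℕ) : ℝ)) < ∑ i, ((b' i : ℕ) : ℝ) :=
          lt_of_mul_lt_mul_left hlt' hE.le
        have : (∑ i, (b i : ℕ)) < ∑ i, (b' i : ℕ) := by exact_mod_cast h'
        omega
    -- goal : P b' ≤ P b
      apply p_compare
      rw [negsum, negsum, neg_le_neg_iff, mul_le_mul_iff_right₀ hE, split, split]
      apply arith_core hTB hT hnB hc
      · exact Finset.sum_nonneg fun i _ => by positivity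
      · calc (∑ i : Fin (nA + nB), if (i : ℕ) < nA then 0 else ((b i : ℕ) : ℝ))
            ≤ ∑ i : Fin (nA + nB), (if (i : ℕ) < nA then 0 else (1:ℝ)) := by
              refine Finset.sum_le_sum fun i _ => ?_
              by_cases hi : (i : ℕ) < nA <;> simp [hi]
              exact_mod_cast Fin.is_le (b i)
          _ = (nB : ℝ) := by rw [cardB 1, mul_one]
      · have e1 : (∑ i : Fin (nA + nB), if (i : ℕ) < nA then ((b i : ℕ) : ℝ) else 0)
            + (∑ i : Fin (nA + nB), if (i : ℕ) < nA then 0 else ((b i : ℕ) : ℝ))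
            = ∑ i, ((b i : ℕ) : ℝ) := by
          rw [← Finset.sum_add_distrib]
          refine Finset.sum_congr rfl fun i _ => ?_
          by_cases hi : (i : ℕ) < nA <;> simp [hi]
        have e2 : (∑ i : Fin (nA + nB), if (i : ℕ) < nA then ((b' i : ℕ) : ℝ) else 0)
            + (∑ i : Fin (nA + nB), if (i : ℕ) < nA then 0 else ((b' i : ℕ) : ℝ))
            = ∑ i, ((b' i : ℕ) : ℝ) := by
          rw [← Finset.sum_add_distrib]
          refine Finset.sum_congr rfl fun i _ => ?_
          by_cases hi : (i : ℕ) < nA <;> simp [hi]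
        have hSR : (∑ i, ((b i : ℕ) : ℝ)) + 1 ≤ ∑ i, ((b' i : ℕ) : ℝ) := by
          push_cast [← Nat.cast_sum]
          exact_mod_cast hS
        linarith
    rw [tr_form, tr_diag] at hlt
    have hbound := ds_bound (normSq_ds hU) hA
    simp only [Matrix.of_apply] at hbound
    exact absurd hlt (not_lt.mpr hbound)
  · -- temperature ratio large → engine exists
    intro hgt
    rw [div_lt_div_iff₀ hnB0 hTB] at hgt
    -- hgt : ((nB:ℝ)+1) * T_B < T_A * nB
    set b0 : Fin (nA + nB) → Fin 2 := fun i => if (i : ℕ) < nB + 1 then 1 else 0 with hb0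
    set b1 : Fin (nA + nB) → Fin 2 := fun i => if (i : ℕ) < nA then 0 else 1 with hb1
    have hne : b0 ≠ b1 := by
      intro hbb
      have h0A : (0 : ℕ) < nA := by omega
      have := congrFun hbb ⟨0, by omega⟩
      simp [hb0, hb1, h0A] at this
    set σ : Equiv.Perm (Fin (nA + nB) → Fin 2) := Equiv.swap b0 b1 with hσ
    refine ⟨σ.permMatrix ℂ, permMatrix_unitary σ, ?_⟩
    rw [tr_form, tr_diag]
    show (∑ i, ∑ j, Complex.normSq ((σ.permMatrix ℂ) i j) * P j * H i) < ∑ i, P i * H i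
    have collapse : ∑ i, ∑ j, Complex.normSq ((σ.permMatrix ℂ) i j) * P j * H i
        = ∑ i, P (σ i) * H i := by
      refine Finset.sum_congr rfl fun i _ => ?_
      simp only [normSq_permMatrix, ite_mul, one_mul, zero_mul]
      rw [Finset.sum_ite_eq Finset.univ (σ i) (fun j => P j * H i)]
      simp
    rw [collapse]
    -- weights of b0 and b1
    have w0 : ∑ i, ((b0 i : ℕ) : ℝ) = (nB : ℝ) + 1 := by
      have : ∀ i : Fin (nA + nB), ((b0 i : ℕ) : ℝ) = if (i : ℕ) < nB + 1 then 1 else 0 := by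
        intro i; by_cases hi : (i : ℕ) < nB + 1
        · simp [hb0, hi, Nat.le_of_lt_succ hi]
        · simp [hb0, hi, show nB < (i : ℕ) by omega]
      rw [Finset.sum_congr rfl fun i _ => this i, cardA (nB + 1) (by omega) 1]
      push_cast; ring
    have w1 : ∑ i, ((b1 i : ℕ) : ℝ) = (nB : ℝ) := by
      have : ∀ i : Fin (nA + nB), ((b1 i : ℕ) : ℝ) = if (i : ℕ) < nA then 0 else 1 := by
        intro i; by_cases hi : (i : ℕ) < nA <;> simp [hb1, hi]
      rw [Finset.sum_congr rfl fun i _ => this i, cardB 1, mul_one]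
    have hH01 : H b1 < H b0 := by
      simp only [hHdef, w0, w1]
      have : (nB : ℝ) < (nB : ℝ) + 1 := by linarith
      exact mul_lt_mul_of_pos_left this hE
    -- probabilities
    have hP01 : P b1 < P b0 := by
      apply p_compare_lt
      have S0 : ∑ i, -(E * ((b0 i : ℕ) : ℝ)) / T i = ((nB : ℝ) + 1) * (-E / T_A) := by
        have : ∀ i : Fin (nA + nB), -(E * ((b0 i : ℕ) : ℝ)) / T i
            = if (i : ℕ) < nB + 1 then -E / T_A else 0 := by
          intro i
          by_cases h1 : (i : ℕ) < nB + 1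
          · have h2 : (i : ℕ) < nA := by omega
            simp [hb0, hTdef, h1, h2, neg_div, Nat.le_of_lt_succ h1]
          · simp [hb0, hTdef, h1, show nB < (i : ℕ) by omega]
        rw [Finset.sum_congr rfl fun i _ => this i, cardA (nB + 1) (by omega) _]
        push_cast; ring
      have S1 : ∑ i, -(E * ((b1 i : ℕ) : ℝ)) / T i = (nB : ℝ) * (-E / T_B) := by
        have : ∀ i : Fin (nA + nB), -(E * ((b1 i : ℕ) : ℝ)) / T i
            = if (i : ℕ) < nA then 0 else -E / T_B := by
          intro i
          by_cases h1 : (i : ℕ) < nA <;> simp [hb1, hTdef, h1, neg_div]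
        rw [Finset.sum_congr rfl fun i _ => this i, cardB _]
      rw [S0, S1]
      calc (nB : ℝ) * (-E / T_B) = -(((nB : ℝ) * E) / T_B) := by ring
        _ < -((((nB : ℝ) + 1) * E) / T_A) := by
            rw [neg_lt_neg_iff, div_lt_div_iff₀ hTA hTB]
            nlinarith
        _ = ((nB : ℝ) + 1) * (-E / T_A) := by ring
    -- final sum comparison
    have hfun : ∀ i, P (σ i) * H i = P i * H i +
        (if i = b0 then (P b1 - P b0) * H b0 else if i = b1 then (P b0 - P b1) * H b1 else 0) := by
      intro i
      rcases eq_or_ne i b0 with rfl | h0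
      · rw [hσ]; simp [Equiv.swap_apply_left, hne]; ring
      rcases eq_or_ne i b1 with rfl | h1
      · rw [hσ]; simp [Equiv.swap_apply_right, h0, hne]; ring
      · rw [hσ]; simp [Equiv.swap_apply_of_ne_of_ne h0 h1, h0, h1]
    rw [Finset.sum_congr rfl fun i _ => hfun i, Finset.sum_add_distrib]
    have hsplit2 : ∑ i : Fin (nA + nB) → Fin 2,
        (if i = b0 then (P b1 - P b0) * H b0 else if i = b1 then (P b0 - P b1) * H b1 else 0)
        = (P b1 - P b0) * H b0 + (P b0 - P b1) * H b1 := by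
      have : ∀ i : Fin (nA + nB) → Fin 2,
          (if i = b0 then (P b1 - P b0) * H b0 else if i = b1 then (P b0 - P b1) * H b1 else 0)
          = (if i = b0 then (P b1 - P b0) * H b0 else 0)
            + (if i = b1 then (P b0 - P b1) * H b1 else 0) := by
        intro i
        rcases eq_or_ne i b0 with rfl | h0
        · simp [hne]
        · simp [h0]
      rw [Finset.sum_congr rfl fun i _ => this i, Finset.sum_add_distrib,
        Finset.sum_ite_eq' Finset.univ b0, Finset.sum_ite_eq' Finset.univ b1]
      simp
    rw [hsplit2]
    nlinarith [mul_pos (sub_pos.2 hP01) (sub_pos.2 hH01)]
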